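/- Let d ≥ 1, let γ = (γ_1,…,γ_d) be a vector of positive real numbers, and for n ∈ ℕ let Δ_n(γ) := {m ∈ ℕ^d | m·γ < n+1}. Then mean(Δ_n(γ)·γ) ≤ (d/(d+1))·max(Δ_n(γ)·γ) < (n+1)·d/(d+1). -/
import Mathlib


/-- The weight of `m ∈ ℕ^d` with respect to the weight vector `γ`. -/
noncomputable def weight (d : ℕ) (γ : Fin d → ℝ) (m : Fin d → ℕ) : ℝ :=
  ∑ i, (m i : ℝ) * γ i

/-- `Δ_n(γ) = {m ∈ ℕ^d | m·γ < n+1}`. -/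
def Delta (d : ℕ) (γ : Fin d → ℝ) (n : ℕ) : Set (Fin d → ℕ) :=
  {m | weight d γ m < n + 1}

/-- The mean weight of a (finite) subset of `ℕ^d`. -/
noncomputable def meanWeight (d : ℕ) (γ : Fin d → ℝ) (B : Set (Fin d → ℕ)) : ℝ :=
  (B.ncard : ℝ)⁻¹ * ∑ᶠ b ∈ B, weight d γ b

/-- The maximal weight of an element of a subset of `ℕ^d`. -/
noncomputable def maxWeight (d : ℕ) (γ : Fin d → ℝ) (B : Set (Fin d → ℕ)) : ℝ :=
  sSup (weight d γ '' B)

section aux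
variable {d : ℕ} {γ : Fin d → ℝ} {n : ℕ}

lemma weight_nonneg (hγ : ∀ i, 0 < γ i) (m : Fin d → ℕ) : 0 ≤ weight d γ m :=
  Finset.sum_nonneg fun i _ => mul_nonneg (Nat.cast_nonneg _) (hγ i).le

lemma coord_le_weight (hγ : ∀ i, 0 < γ i) (m : Fin d → ℕ) (i : Fin d) :
    (m i : ℝ) * γ i ≤ weight d γ m :=
  Finset.single_le_sum (f := fun j => (m j : ℝ) * γ j)
    (fun j _ => mul_nonneg (Nat.cast_nonneg _) (hγ j).le) (Finset.mem_univ i)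

lemma weight_update (γ : Fin d → ℝ) (m : Fin d → ℕ) (i : Fin d) (k : ℕ) :
    weight d γ (Function.update m i k) = weight d γ m + ((k : ℝ) - m i) * γ i := by
  unfold weight
  rw [← Finset.add_sum_erase _ _ (Finset.mem_univ i), ← Finset.add_sum_erase _ _ (Finset.mem_univ i)]
  have : ∀ j ∈ Finset.univ.erase i, ((Function.update m i k j : ℝ)) * γ j = (m j : ℝ) * γ j := by
    intro j hj
    rw [Function.update_of_ne (Finset.mem_erase.1 hj).1]
  rw [Finset.sum_congr rfl this, Function.update_self]
  ring

lemma delta_finite (hγ : ∀ i, 0 < γ i) (n : ℕ) : (Delta d γ n).Finite := by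
  have : Delta d γ n ⊆ Set.Icc 0 (fun i => ⌈((n : ℝ) + 1) / γ i⌉₊) := by
    intro m hm
    constructor
    · intro i; exact Nat.zero_le _
    · intro i
      have h1 : (m i : ℝ) * γ i < n + 1 := lt_of_le_of_lt (coord_le_weight hγ m i) hm
      have h2 : (m i : ℝ) < ((n : ℝ) + 1) / γ i := by
        rw [lt_div_iff₀ (hγ i)]; exact h1
      have := h2.le.trans (Nat.le_ceil _)
      exact_mod_cast this
  exact (Set.finite_Icc _ _).subset this

end aux

section top
variable {d : ℕ} {γ : Fin d → ℝ} {n : ℕ}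

open Classical in
/-- the largest value `k` such that replacing the `i`-th coordinate of `m` by `k`
stays in `Δ_n(γ)`. -/
noncomputable def topOf (d : ℕ) (γ : Fin d → ℝ) (n : ℕ) (i : Fin d) (m : Fin d → ℕ) : ℕ :=
  Nat.findGreatest (fun k => weight d γ (Function.update m i k) < n + 1)
    (max (m i) ⌈((n : ℝ) + 1) / γ i⌉₊)

lemma topOf_greatest (hγ : ∀ i, 0 < γ i) {m : Fin d → ℕ} {i : Fin d} {k : ℕ}
    (hk : weight d γ (Function.update m i k) < n + 1) : k ≤ topOf d γ n i m := by
  classical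
  have hbd : k ≤ max (m i) ⌈((n : ℝ) + 1) / γ i⌉₊ := by
    have h1 : (k : ℝ) * γ i ≤ weight d γ (Function.update m i k) := by
      have := coord_le_weight hγ (Function.update m i k) i
      rwa [Function.update_self] at this
    have h2 : (k : ℝ) < ((n : ℝ) + 1) / γ i := by
      rw [lt_div_iff₀ (hγ i)]; exact lt_of_le_of_lt h1 hk
    have h3 : k ≤ ⌈((n : ℝ) + 1) / γ i⌉₊ := by
      exact_mod_cast h2.le.trans (Nat.le_ceil _)
    exact h3.trans (le_max_right _ _)
  exact Nat.le_findGreatest (P := fun k => weight d γ (Function.update m i k) < n + 1) hbd hk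

lemma topOf_spec (hγ : ∀ i, 0 < γ i) {m : Fin d → ℕ} {i : Fin d} (hm : m ∈ Delta d γ n) :
    weight d γ (Function.update m i (topOf d γ n i m)) < n + 1 := by
  classical
  have h0 : weight d γ (Function.update m i (m i)) < n + 1 := by
    rwa [Function.update_eq_self]
  exact Nat.findGreatest_spec (P := fun k => weight d γ (Function.update m i k) < n + 1)
    (le_max_left _ _) h0

lemma le_topOf (hγ : ∀ i, 0 < γ i) {m : Fin d → ℕ} {i : Fin d} (hm : m ∈ Delta d γ n) :
    m i ≤ topOf d γ n i m :=
  topOf_greatest hγ (by rwa [Function.update_eq_self])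

end top

section key
variable {d : ℕ} {γ : Fin d → ℝ} {n : ℕ}

lemma key_ineq (hγ : ∀ i, 0 < γ i) (n : ℕ) (F : Finset (Fin d → ℕ))
    (hF : ∀ m, m ∈ F ↔ m ∈ Delta d γ n) (i : Fin d) :
    ∑ m ∈ F, (weight d γ m + (m i : ℝ) * γ i) ≤ maxWeight d γ (Delta d γ n) * F.card := by
  classical
  set M := maxWeight d γ (Delta d γ n) with hMdef
  have hfin : (Delta d γ n).Finite := delta_finite hγ n
  have hMub : ∀ m ∈ Delta d γ n, weight d γ m ≤ M := by
    intro m hm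
    exact le_csSup (hfin.image _).bddAbove ⟨m, hm, rfl⟩
  set σ : (Fin d → ℕ) → (Fin d → ℕ) :=
    fun m => Function.update m i (topOf d γ n i m - m i) with hσdef
  -- σ maps F into F
  have hσmem : ∀ m ∈ F, σ m ∈ F := by
    intro m hm
    rw [hF] at hm ⊢
    have hK := topOf_spec (i := i) hγ hm
    have hle : m i ≤ topOf d γ n i m := le_topOf hγ hm
    show weight d γ _ < n + 1
    rw [hσdef]
    rw [weight_update, Nat.cast_sub hle]
    rw [weight_update] at hK
    have : ((topOf d γ n i m : ℝ) - m i - m i) * γ i ≤ ((topOf d γ n i m : ℝ) - m i) * γ i := by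
      apply mul_le_mul_of_nonneg_right _ (hγ i).le
      have : (0:ℝ) ≤ (m i : ℝ) := Nat.cast_nonneg _
      linarith
    linarith
  -- topOf is invariant under σ
  have htop : ∀ m ∈ F, topOf d γ n i (σ m) = topOf d γ n i m := by
    intro m hm
    have hm' := hσmem m hm
    rw [hF] at hm hm'
    have hupd : ∀ k : ℕ, Function.update (σ m) i k = Function.update m i k := by
      intro k; rw [hσdef]; exact Function.update_idem ..
    apply le_antisymm
    · apply topOf_greatest hγ
      rw [← hupd]
      exact topOf_spec hγ hm'
    · apply topOf_greatest hγ
      rw [hupd]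
      exact topOf_spec hγ hm
  -- σ is an involution on F
  have hσσ : ∀ m ∈ F, σ (σ m) = m := by
    intro m hm
    have hle : m i ≤ topOf d γ n i m := le_topOf hγ ((hF m).1 hm)
    have h2 := htop m hm
    simp only [hσdef] at h2 ⊢
    rw [h2, Function.update_self, Function.update_idem]
    have h3 : topOf d γ n i m - (topOf d γ n i m - m i) = m i := by omega
    rw [h3, Function.update_eq_self]
  -- the pairing inequality
  have hpair : ∀ m ∈ F, (weight d γ m + (m i : ℝ) * γ i)
      + (weight d γ (σ m) + ((σ m) i : ℝ) * γ i) ≤ 2 * M := by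
    intro m hm
    have hmD := (hF m).1 hm
    have hle : m i ≤ topOf d γ n i m := le_topOf hγ hmD
    have hMt : weight d γ (Function.update m i (topOf d γ n i m)) ≤ M :=
      hMub _ (topOf_spec hγ hmD)
    have hσi : ((σ m) i : ℝ) = (topOf d γ n i m : ℝ) - m i := by
      simp only [hσdef, Function.update_self]
      rw [Nat.cast_sub hle]
    have hσw : weight d γ (σ m)
        = weight d γ m + (((topOf d γ n i m : ℝ) - m i) - m i) * γ i := by
      simp only [hσdef]
      rw [weight_update, Nat.cast_sub hle]
    rw [weight_update] at hMt
    rw [hσi, hσw]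
    nlinarith [hMt]
  have hsum : ∑ m ∈ F, (weight d γ m + (m i : ℝ) * γ i)
      = ∑ m ∈ F, (weight d γ (σ m) + ((σ m) i : ℝ) * γ i) :=
    Finset.sum_nbij' σ σ hσmem hσmem hσσ hσσ (fun a ha => by rw [hσσ a ha])
  have h2 : 2 * ∑ m ∈ F, (weight d γ m + (m i : ℝ) * γ i) ≤ 2 * (M * F.card) := by
    calc 2 * ∑ m ∈ F, (weight d γ m + (m i : ℝ) * γ i)
        = ∑ m ∈ F, (weight d γ m + (m i : ℝ) * γ i)
          + ∑ m ∈ F, (weight d γ (σ m) + ((σ m) i : ℝ) * γ i) := by rw [← hsum]; ring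
      _ = ∑ m ∈ F, ((weight d γ m + (m i : ℝ) * γ i)
          + (weight d γ (σ m) + ((σ m) i : ℝ) * γ i)) := Finset.sum_add_distrib.symm
      _ ≤ ∑ _m ∈ F, (2 * M) := Finset.sum_le_sum hpair
      _ = 2 * (M * F.card) := by rw [Finset.sum_const, nsmul_eq_mul]; ring
  linarith

end key


theorem stmt_1 (d : ℕ) (hd : 1 ≤ d) (γ : Fin d → ℝ) (hγ : ∀ i, 0 < γ i) (n : ℕ) :
    meanWeight d γ (Delta d γ n) ≤ (d / (d + 1)) * maxWeight d γ (Delta d γ n) ∧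
      (d / (d + 1)) * maxWeight d γ (Delta d γ n) < (n + 1) * (d / (d + 1)) := by
  classical
  have hfin : (Delta d γ n).Finite := delta_finite hγ n
  set F := hfin.toFinset with hFdef
  have hF : ∀ m, m ∈ F ↔ m ∈ Delta d γ n := fun m => hfin.mem_toFinset
  have h0 : (0 : Fin d → ℕ) ∈ Delta d γ n := by
    show weight d γ 0 < n + 1
    have h : weight d γ 0 = 0 := by simp [weight]
    rw [h]; positivity
  have hFne : F.Nonempty := ⟨0, (hF 0).2 h0⟩
  have hcard : (0:ℝ) < F.card := by exact_mod_cast hFne.card_pos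
  set M := maxWeight d γ (Delta d γ n) with hMdef
  have hMmem : M ∈ weight d γ '' Delta d γ n :=
    Set.Nonempty.csSup_mem ⟨_, ⟨0, h0, rfl⟩⟩ (hfin.image _)
  obtain ⟨m₀, hm₀, hm₀w⟩ := hMmem
  have hMlt : M < n + 1 := by rw [← hm₀w]; exact hm₀
  have hM0 : 0 ≤ M := by rw [← hm₀w]; exact weight_nonneg hγ m₀
  have hd1 : (1:ℝ) ≤ d := by exact_mod_cast hd
  have hdpos : (0:ℝ) < (d:ℝ) / (d+1) := div_pos (by linarith) (by linarith)
  have hsumW : ∑ i : Fin d, ∑ m ∈ F, (weight d γ m + (m i : ℝ) * γ i)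
      ≤ d * (M * F.card) := by
    calc ∑ i : Fin d, ∑ m ∈ F, (weight d γ m + (m i : ℝ) * γ i)
        ≤ ∑ _i : Fin d, (M * F.card) :=
          Finset.sum_le_sum (fun i _ => key_ineq hγ n F hF i)
      _ = d * (M * F.card) := by rw [Finset.sum_const, nsmul_eq_mul]; simp
  have hswap : ∑ i : Fin d, ∑ m ∈ F, (weight d γ m + (m i : ℝ) * γ i)
      = (d + 1) * ∑ m ∈ F, weight d γ m := by
    rw [Finset.sum_comm]
    have h : ∀ m ∈ F, ∑ i : Fin d, (weight d γ m + (m i : ℝ) * γ i)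
        = ((d:ℝ) + 1) * weight d γ m := by
      intro m _
      rw [Finset.sum_add_distrib, Finset.sum_const]
      have : ∑ i : Fin d, (m i : ℝ) * γ i = weight d γ m := rfl
      rw [this, nsmul_eq_mul]
      simp only [Finset.card_univ, Fintype.card_fin]
      ring
    rw [Finset.sum_congr rfl h, ← Finset.mul_sum]
  have hkey : ((d:ℝ) + 1) * ∑ m ∈ F, weight d γ m ≤ d * (M * F.card) := by
    rw [← hswap]; exact hsumW
  have hSnn : 0 ≤ ∑ m ∈ F, weight d γ m :=
    Finset.sum_nonneg fun m _ => weight_nonneg hγ m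
  constructor
  · show ((Delta d γ n).ncard : ℝ)⁻¹ * ∑ᶠ b ∈ Delta d γ n, weight d γ b ≤ (d / (d + 1)) * M
    rw [Set.ncard_eq_toFinset_card _ hfin, finsum_mem_eq_finite_toFinset_sum _ hfin]
    rw [← hFdef, inv_mul_le_iff₀ hcard,
      show (F.card : ℝ) * ((d:ℝ)/((d:ℝ)+1)*M) = (d:ℝ)*(M*(F.card:ℝ))/((d:ℝ)+1) from by ring,
      le_div_iff₀ (by linarith : (0:ℝ) < (d:ℝ)+1)]
    nlinarith [hkey]
  · calc (d:ℝ)/(d+1)*M < (d:ℝ)/(d+1)*((n:ℝ)+1) := mul_lt_mul_of_pos_left hMlt hdpos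
      _ = ((n:ℝ)+1)*((d:ℝ)/(d+1)) := by ring
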